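/- In the Banach space c₀ of real sequences converging to 0 (with the supremum norm), there exists a set S ⊆ c₀ which is Haar meager (and hence meager) but not Haar null. -/

import Mathlib

open MeasureTheory Set

/-- A set in a topological abelian group is *Haar meager* if there is a Borel set `B ⊇ A`,
a nonempty compact metric space `K` and a continuous `f : K → G` such that `f ⁻¹' (B + x)`
is meager in `K` for every `x ∈ G`. -/
def IsHaarMeager {G : Type*} [TopologicalSpace G] [AddCommGroup G] (A : Set G) : Prop :=
  ∃ B : Set G, A ⊆ B ∧ MeasurableSet[borel G] B ∧
    ∃ (K : Type) (_ : MetricSpace K) (_ : CompactSpace K) (_ : Nonempty K) (f : K → G),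
      Continuous f ∧ ∀ x : G, IsMeagre (f ⁻¹' ((fun b => b + x) '' B))

/-- A set in a topological abelian group is *Haar null* if there is a Borel probability
measure `μ` and a Borel set `B ⊇ A` with `μ (x + B) = 0` for every `x ∈ G`. -/
def IsHaarNull {G : Type*} [TopologicalSpace G] [AddCommGroup G] (A : Set G) : Prop :=
  ∃ μ : @Measure G (borel G), @IsProbabilityMeasure G (borel G) μ ∧
    ∃ B : Set G, A ⊆ B ∧ MeasurableSet[borel G] B ∧
      ∀ x : G, μ ((fun b => x + b) '' B) = 0

open ZeroAtInfty

/- ---------------------------------------------------------------------------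
Auxiliary material
--------------------------------------------------------------------------- -/

open Filter Topology
open scoped ENNReal NNReal

noncomputable section

namespace HMAux

instance : TopologicalSpace (ZMod 2) := ⊥
instance : DiscreteTopology (ZMod 2) := ⟨rfl⟩

/-- the `k`-th block of coordinates -/
def blk (k : ℕ) : Finset ℕ := Finset.Ico (2 ^ k) (2 ^ (k + 1))

lemma card_blk (k : ℕ) : (blk k).card = 2 ^ k := by
  simp only [blk, Nat.card_Ico, pow_succ]
  omega

lemma mem_blk_ge {k n : ℕ} (h : n ∈ blk k) : 2 ^ k ≤ n := (Finset.mem_Ico.1 h).1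

/-- The set `S`: eventually every block contains a coordinate with even "digit". -/
def SS : Set C₀(ℕ, ℝ) :=
  {y | ∀ᶠ k in atTop, ∃ n ∈ blk k, Even ⌊(y n) * 2 ^ n⌋}

lemma norm_le_of_forall (f : C₀(ℕ, ℝ)) {C : ℝ} (hC : 0 ≤ C) (h : ∀ n, |f n| ≤ C) :
    ‖f‖ ≤ C := by
  rw [← ZeroAtInftyContinuousMap.norm_toBCF_eq_norm]
  exact (BoundedContinuousFunction.norm_le hC).2 h

lemma continuous_eval (n : ℕ) : Continuous fun y : C₀(ℕ, ℝ) => y n := by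
  exact (continuous_eval_const n : Continuous fun g : BoundedContinuousFunction ℕ ℝ => g n).comp
    (ZeroAtInftyContinuousMap.isometry_toBCF).continuous

/-- The coordinates of the Cantor-type map into `c₀`. -/
def gf (ε : ℕ → ZMod 2) (n : ℕ) : ℝ := if ε n = 0 then 0 else 2⁻¹ ^ n

lemma abs_gf_le (ε : ℕ → ZMod 2) (n : ℕ) : |gf ε n| ≤ 2⁻¹ ^ n := by
  unfold gf; split
  · rw [abs_zero]; positivity
  · rw [abs_of_nonneg (by positivity)]

/-- The Cantor-type map into `c₀`. -/
def gmap (ε : ℕ → ZMod 2) : C₀(ℕ, ℝ) :=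
  ⟨⟨gf ε, continuous_of_discreteTopology⟩, by
    rw [cocompact_eq_atTop (α := ℕ)]
    have h1 : Tendsto (fun n : ℕ => (2⁻¹ : ℝ) ^ n) atTop (nhds 0) :=
      tendsto_pow_atTop_nhds_zero_of_lt_one (by norm_num) (by norm_num)
    exact squeeze_zero_norm (fun n => abs_gf_le ε n) h1⟩

@[simp] lemma gmap_apply (ε : ℕ → ZMod 2) (n : ℕ) : gmap ε n = gf ε n := rfl

/-- the good value at coordinate `n` for the translate `x` -/
def good (x : C₀(ℕ, ℝ)) (n : ℕ) : ZMod 2 := if Even ⌊(-(x n)) * 2 ^ n⌋ then 0 else 1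

lemma zmod2_cases (u : ZMod 2) : u = 0 ∨ u = 1 := by revert u; decide

lemma parity_iff (x : C₀(ℕ, ℝ)) (ε : ℕ → ZMod 2) (n : ℕ) :
    Even ⌊(gf ε n - x n) * 2 ^ n⌋ ↔ ε n = good x n := by
  rcases zmod2_cases (ε n) with h | h
  · have hgf : gf ε n = 0 := by simp only [gf]; rw [if_pos h]
    have he : (gf ε n - x n) * 2 ^ n = (-(x n)) * 2 ^ n := by rw [hgf]; ring
    rw [he]
    unfold good
    split_ifs with hp
    · exact iff_of_true hp (by rw [h])
    · exact iff_of_false hp (by rw [h]; decide)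
  · have hne : ε n ≠ 0 := by rw [h]; decide
    have hgf : gf ε n = 2⁻¹ ^ n := by simp only [gf]; rw [if_neg hne]
    have hmul : ((2 : ℝ)⁻¹) ^ n * 2 ^ n = 1 := by rw [← mul_pow]; norm_num
    have he : (gf ε n - x n) * 2 ^ n = (-(x n)) * 2 ^ n + 1 := by
      rw [hgf, sub_mul, hmul]; ring
    rw [he, Int.floor_add_one, Int.even_add_one]
    unfold good
    split_ifs with hp
    · exact iff_of_false (not_not.2 hp) (by rw [h]; decide)
    · exact iff_of_true hp (by rw [h])

/-- the set of `ε` whose blocks eventually contain a coordinate with the prescribed value -/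
def EVset (v : ℕ → ZMod 2) : Set (ℕ → ZMod 2) :=
  {ε | ∀ᶠ k in atTop, ∃ n ∈ blk k, ε n = v n}

lemma preimage_EVset (x : C₀(ℕ, ℝ)) :
    (fun ε => gmap ε - x) ⁻¹' SS = EVset (good x) := by
  ext ε
  simp only [mem_preimage, SS, EVset, mem_setOf_eq, ZeroAtInftyContinuousMap.coe_sub,
    Pi.sub_apply, gmap_apply]
  exact eventually_congr (Eventually.of_forall fun k =>
    exists_congr fun n => and_congr_right fun _ => parity_iff x ε n)

/-! ### Category side -/

/-- In the product space, the set of `ε` realizing prescribed values eventually on blocks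
is meager. -/
lemma isMeagre_of_dense_open {X : Type*} [TopologicalSpace X] {S : Set X} (U : ℕ → Set X)
    (hO : ∀ m, IsOpen (U m)) (hD : ∀ m, Dense (U m)) (hS : S ⊆ ⋃ m, (U m)ᶜ) : IsMeagre S := by
  refine IsMeagre.mono hS (isMeagre_iUnion fun m => ?_)
  rw [IsMeagre, compl_compl]
  exact residual_of_dense_open (hO m) (hD m)

lemma zmod2_ne_add_one (u : ZMod 2) : u ≠ u + 1 := by revert u; decide

lemma isMeagre_EVset (v : ℕ → ZMod 2) : IsMeagre (EVset v) := by
  set U : ℕ → Set (ℕ → ZMod 2) :=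
    fun m => ⋃ k, ⋃ (_ : m ≤ k), {ε | ∀ n ∈ blk k, ε n = v n + 1} with hU
  have hopen : ∀ m, IsOpen (U m) := by
    intro m
    refine isOpen_iUnion fun k => isOpen_iUnion fun _ => ?_
    have : {ε : ℕ → ZMod 2 | ∀ n ∈ blk k, ε n = v n + 1} =
        Set.pi (↑(blk k) : Set ℕ) (fun n => {v n + 1}) := by
      ext ε; simp [Set.pi]
    rw [this]
    exact isOpen_set_pi (Finset.finite_toSet _) fun n _ => isOpen_discrete _
  have hdense : ∀ m, Dense (U m) := by
    intro m
    rw [dense_iff_inter_open]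
    intro W hW hWne
    obtain ⟨ε₀, hε₀⟩ := hWne
    obtain ⟨I, u, hu, hsub⟩ := isOpen_pi_iff.1 hW ε₀ hε₀
    set k := max m (I.sup id) with hk
    have hIk : ∀ i ∈ I, i ∉ blk k := by
      intro i hi hib
      have h1 : i ≤ I.sup id := Finset.le_sup (f := id) hi
      have h2 : I.sup id < 2 ^ k :=
        lt_of_le_of_lt (le_max_right m _) Nat.lt_two_pow_self
      exact absurd (mem_blk_ge hib) (by omega)
    refine ⟨fun n => if n ∈ blk k then v n + 1 else ε₀ n, ?_, ?_⟩
    · apply hsub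
      intro i hi
      simp only [if_neg (hIk i hi)]
      exact (hu i hi).2
    · refine mem_iUnion.2 ⟨k, mem_iUnion.2 ⟨le_max_left m _, ?_⟩⟩
      intro n hn
      simp [if_pos hn]
  refine isMeagre_of_dense_open U hopen hdense ?_
  intro ε hε
  rw [EVset, mem_setOf_eq, eventually_atTop] at hε
  obtain ⟨m, hm⟩ := hε
  refine mem_iUnion.2 ⟨m, ?_⟩
  intro hc
  simp only [hU, mem_iUnion] at hc
  obtain ⟨k, hk, hbad⟩ := hc
  obtain ⟨n, hn, hgood⟩ := hm k hk
  rw [hbad n hn] at hgood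
  exact zmod2_ne_add_one (v n) hgood.symm

/-- `gmap` is continuous (for the product topology). -/
lemma continuous_gmap : Continuous gmap := by
  rw [continuous_iff_continuousAt]
  intro ε₀
  rw [ContinuousAt, Metric.tendsto_nhds]
  intro δ hδ
  obtain ⟨N, hN⟩ : ∃ N : ℕ, (2⁻¹ : ℝ) ^ N < δ / 2 :=
    exists_pow_lt_of_lt_one (by positivity) (by norm_num)
  have hmem : {ε : ℕ → ZMod 2 | ∀ n ∈ Finset.range N, ε n = ε₀ n} ∈ nhds ε₀ := by
    have hpi : {ε : ℕ → ZMod 2 | ∀ n ∈ Finset.range N, ε n = ε₀ n} =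
        Set.pi (↑(Finset.range N) : Set ℕ) (fun n => {ε₀ n}) := by
      ext ε; simp [Set.pi]
    rw [hpi]
    exact (isOpen_set_pi (Finset.finite_toSet _) fun n _ => isOpen_discrete _).mem_nhds
      (by simp [Set.pi])
  filter_upwards [hmem] with ε hε
  rw [dist_eq_norm]
  have hb : ∀ n, |(gmap ε - gmap ε₀) n| ≤ 2 * 2⁻¹ ^ N := by
    intro n
    have hco : (gmap ε - gmap ε₀) n = gf ε n - gf ε₀ n := by
      simp [ZeroAtInftyContinuousMap.coe_sub]
    rw [hco]
    by_cases hn : n < N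
    · have : gf ε n = gf ε₀ n := by unfold gf; rw [hε n (Finset.mem_range.2 hn)]
      rw [this, sub_self, abs_zero]
      positivity
    · calc |gf ε n - gf ε₀ n| ≤ |gf ε n| + |gf ε₀ n| := abs_sub _ _
        _ ≤ 2⁻¹ ^ n + 2⁻¹ ^ n := add_le_add (abs_gf_le _ _) (abs_gf_le _ _)
        _ = 2 * 2⁻¹ ^ n := by ring
        _ ≤ 2 * 2⁻¹ ^ N := by
            have h2 : (2⁻¹ : ℝ) ^ n ≤ 2⁻¹ ^ N :=
              pow_le_pow_of_le_one (by norm_num) (by norm_num) (le_of_not_gt hn)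
            linarith
  have hnorm := norm_le_of_forall _ (by positivity) hb
  have : (2 : ℝ) * 2⁻¹ ^ N < δ := by linarith
  linarith

lemma two_inv_pow_lt {δ : ℝ} (hδ : 0 < δ) : ∃ N : ℕ, (2⁻¹ : ℝ) ^ N < δ :=
  exists_pow_lt_of_lt_one hδ (by norm_num)

/-- `S` is meager in `c₀`. -/
lemma isMeagre_SS : IsMeagre SS := by
  set U : ℕ → Set C₀(ℕ, ℝ) := fun m =>
    ⋃ k, ⋃ (_ : m ≤ k), {y | ∀ n ∈ blk k, y n * 2 ^ n ∈ Set.Ioo (1 : ℝ) 2} with hU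
  have hopen : ∀ m, IsOpen (U m) := by
    intro m
    refine isOpen_iUnion fun k => isOpen_iUnion fun _ => ?_
    have hset : {y : C₀(ℕ, ℝ) | ∀ n ∈ blk k, y n * 2 ^ n ∈ Set.Ioo (1 : ℝ) 2} =
        ⋂ n ∈ blk k, (fun y : C₀(ℕ, ℝ) => y n * 2 ^ n) ⁻¹' Set.Ioo (1 : ℝ) 2 := by
      ext y; simp
    rw [hset]
    exact isOpen_biInter_finset fun n _ =>
      isOpen_Ioo.preimage ((continuous_eval n).mul continuous_const)
  have hdense : ∀ m, Dense (U m) := by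
    intro m
    rw [Metric.dense_iff]
    intro h δ hδ
    have hz := zero_at_infty h
    rw [cocompact_eq_atTop (α := ℕ)] at hz
    obtain ⟨N₀, hN₀⟩ := eventually_atTop.1 (Metric.tendsto_nhds.mp hz (δ / 4) (by positivity))
    obtain ⟨N₁, hN₁⟩ := two_inv_pow_lt (show (0:ℝ) < δ/3 by positivity)
    set k := max m (max N₀ N₁) with hk
    have hk2 : k ≤ 2 ^ k := Nat.le_of_lt (Nat.lt_two_pow_self)
    set w : C₀(ℕ, ℝ) := ⟨⟨fun n => if n ∈ blk k then (3 / 2) * 2⁻¹ ^ n - h n else 0,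
        continuous_of_discreteTopology⟩, by
      rw [cocompact_eq_atTop (α := ℕ)]
      apply tendsto_const_nhds.congr'
      filter_upwards [eventually_ge_atTop (2 ^ (k + 1))] with n hn
      have hnb : n ∉ blk k := by
        simp only [blk, Finset.mem_Ico]; omega
      simp [hnb]⟩ with hw
    have hwapp : ∀ n, w n = if n ∈ blk k then (3 / 2) * 2⁻¹ ^ n - h n else 0 := fun n => rfl
    have hwb : ∀ n, |w n| ≤ δ / 2 + δ / 4 := by
      intro n
      rw [hwapp]
      by_cases hn : n ∈ blk k
      · rw [if_pos hn]
        have hge : 2 ^ k ≤ n := mem_blk_ge hn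
        have hp1 : (2⁻¹ : ℝ) ^ n ≤ 2⁻¹ ^ N₁ := by
          apply pow_le_pow_of_le_one (by norm_num) (by norm_num)
          calc N₁ ≤ k := le_trans (le_max_right _ _) (le_max_right _ _)
            _ ≤ 2 ^ k := hk2
            _ ≤ n := hge
        have hp2 : (3 / 2 : ℝ) * 2⁻¹ ^ n ≤ δ / 2 := by nlinarith
        have hhn : |h n| < δ / 4 := by
          have := hN₀ n (le_trans (le_trans (le_trans (le_max_left N₀ N₁) (le_max_right m _)) hk2) hge)
          rwa [Real.dist_eq, sub_zero] at this
        calc |(3 / 2) * 2⁻¹ ^ n - h n| ≤ |(3 / 2) * 2⁻¹ ^ n| + |h n| := abs_sub _ _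
          _ ≤ (3 / 2) * 2⁻¹ ^ n + |h n| := by
              rw [abs_of_nonneg (by positivity)]
          _ ≤ δ / 2 + δ / 4 := by linarith
      · rw [if_neg hn, abs_zero]; positivity
    refine ⟨h + w, Metric.mem_ball.2 ?_, ?_⟩
    · rw [dist_eq_norm, add_sub_cancel_left]
      have := norm_le_of_forall w (by positivity) hwb
      linarith
    · refine mem_iUnion.2 ⟨k, mem_iUnion.2 ⟨le_max_left _ _, ?_⟩⟩
      intro n hn
      have hcoord : (h + w) n = (3 / 2) * 2⁻¹ ^ n := by
        have : (h + w) n = h n + w n := rfl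
        rw [this, hwapp, if_pos hn]; ring
      rw [hcoord]
      have hval : (3 / 2 : ℝ) * 2⁻¹ ^ n * 2 ^ n = 3 / 2 := by
        rw [mul_assoc, ← mul_pow]; norm_num
      rw [hval]
      constructor <;> norm_num
  refine isMeagre_of_dense_open U hopen hdense ?_
  intro y hy
  rw [SS, mem_setOf_eq, eventually_atTop] at hy
  obtain ⟨m, hm⟩ := hy
  refine mem_iUnion.2 ⟨m, ?_⟩
  intro hc
  simp only [hU, mem_iUnion] at hc
  obtain ⟨k, hk, hblk⟩ := hc
  obtain ⟨n, hn, heven⟩ := hm k hk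
  have h12 := hblk n hn
  have hfl : ⌊y n * 2 ^ n⌋ = 1 := by
    rw [Int.floor_eq_iff]
    · push_cast
      exact ⟨le_of_lt h12.1, by linarith [h12.2]⟩
  rw [hfl] at heven
  norm_num at heven

/-! ### Measurability -/

lemma measurableSet_SS : MeasurableSet[borel C₀(ℕ, ℝ)] SS := by
  letI : MeasurableSpace C₀(ℕ, ℝ) := borel _
  haveI : BorelSpace C₀(ℕ, ℝ) := ⟨rfl⟩
  have hset : SS = ⋃ m, ⋂ k, ⋂ (_ : m ≤ k), ⋃ n ∈ blk k,
      {y : C₀(ℕ, ℝ) | Even ⌊y n * 2 ^ n⌋} := by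
    ext y
    simp only [SS, mem_setOf_eq, eventually_atTop, mem_iUnion, mem_iInter]
    constructor
    · rintro ⟨m, hm⟩
      exact ⟨m, fun k hk => by simpa using hm k hk⟩
    · rintro ⟨m, hm⟩
      exact ⟨m, fun k hk => by simpa using hm k hk⟩
  rw [hset]
  refine MeasurableSet.iUnion fun m => MeasurableSet.iInter fun k =>
    MeasurableSet.iInter fun _ => MeasurableSet.biUnion (blk k).countable_toSet fun n _ => ?_
  have heq : {y : C₀(ℕ, ℝ) | Even ⌊y n * 2 ^ n⌋} =
      (fun y : C₀(ℕ, ℝ) => y n * 2 ^ n) ⁻¹' {t : ℝ | Even ⌊t⌋} := rfl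
  rw [heq]
  exact ((continuous_eval n).mul continuous_const).measurable
    (Int.measurable_floor (MeasurableSet.of_discrete (s := {z : ℤ | Even z})))

/-! ### Measure side -/

instance : IsTopologicalAddGroup (ZMod 2) :=
  { continuous_add := continuous_of_discreteTopology
    continuous_neg := continuous_of_discreteTopology }

lemma isOpen_cyl (F : Finset ℕ) (w : ℕ → ZMod 2) :
    IsOpen {ε : ℕ → ZMod 2 | ∀ n ∈ F, ε n = w n} := by
  have hpi : {ε : ℕ → ZMod 2 | ∀ n ∈ F, ε n = w n} =
      Set.pi (↑F : Set ℕ) (fun n => {w n}) := by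
    ext ε; simp [Set.pi]
  rw [hpi]
  exact isOpen_set_pi (Finset.finite_toSet _) fun n _ => isOpen_discrete _

lemma zmod2_cases2 (u v : ZMod 2) : u = v ∨ u = v + 1 := by revert u v; decide

lemma zmod2_one_add (u v : ZMod 2) : 1 + u = v ↔ u = v + 1 := by revert u v; decide

lemma zmod2_ne_iff (u v : ZMod 2) : u ≠ v ↔ u = v + 1 := by revert u v; decide

section MeasureSide

variable [MeasurableSpace (ℕ → ZMod 2)] [BorelSpace (ℕ → ZMod 2)]

lemma haar_cyl (μ : Measure (ℕ → ZMod 2)) [μ.IsAddLeftInvariant] [IsProbabilityMeasure μ]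
    (F : Finset ℕ) (v : ℕ → ZMod 2) :
    μ {ε | ∀ n ∈ F, ε n = v n} = 2⁻¹ ^ F.card := by
  classical
  induction F using Finset.induction_on with
  | empty => simp
  | @insert a F' ha ih =>
    set C0 : Set (ℕ → ZMod 2) := {ε | ∀ n ∈ insert a F', ε n = v n} with hC0
    set C1 : Set (ℕ → ZMod 2) := {ε | (∀ n ∈ F', ε n = v n) ∧ ε a = v a + 1} with hC1
    have hC1m : MeasurableSet C1 := by
      have hset : C1 = {ε : ℕ → ZMod 2 | ∀ n ∈ F', ε n = v n} ∩
          {ε : ℕ → ZMod 2 | ∀ n ∈ ({a} : Finset ℕ), ε n = v n + 1} := by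
        ext ε
        simp only [hC1, mem_setOf_eq, mem_inter_iff, Finset.mem_singleton, forall_eq]
      rw [hset]
      exact ((isOpen_cyl F' v).inter (isOpen_cyl {a} (fun n => v n + 1))).measurableSet
    have hsplit : {ε : ℕ → ZMod 2 | ∀ n ∈ F', ε n = v n} = C0 ∪ C1 := by
      ext ε
      simp only [hC0, hC1, mem_setOf_eq, mem_union, Finset.forall_mem_insert]
      constructor
      · intro h
        rcases zmod2_cases2 (ε a) (v a) with h' | h'
        · exact Or.inl ⟨h', h⟩
        · exact Or.inr ⟨h, h'⟩
      · rintro (⟨_, h⟩ | ⟨h, _⟩) <;> exact h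
    have hdisj : Disjoint C0 C1 := by
      rw [Set.disjoint_left]
      rintro ε hε0 hε1
      have h1 : ε a = v a := by
        have := hε0
        rw [hC0, mem_setOf_eq, Finset.forall_mem_insert] at this
        exact this.1
      have h2 : ε a = v a + 1 := hε1.2
      exact zmod2_ne_add_one (v a) (h1 ▸ h2)
    have htrans : C1 = (fun ε => (fun n => if n = a then 1 else 0) + ε) ⁻¹' C0 := by
      ext ε
      simp only [hC0, hC1, mem_setOf_eq, mem_preimage, Pi.add_apply,
        Finset.forall_mem_insert]
      constructor
      · rintro ⟨hF, hA⟩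
        constructor
        · simp only [if_true]
          exact (zmod2_one_add _ _).2 hA
        · intro n hn
          have hna : n ≠ a := fun h => ha (h ▸ hn)
          simp only [if_neg hna, zero_add]
          exact hF n hn
      · rintro ⟨hA, hF⟩
        constructor
        · intro n hn
          have hna : n ≠ a := fun h => ha (h ▸ hn)
          have := hF n hn
          simpa [if_neg hna] using this
        · simp only [if_true] at hA
          exact (zmod2_one_add _ _).1 hA
    have hm12 : μ C1 = μ C0 := by
      rw [htrans]
      exact measure_preimage_add μ _ C0
    have hA : μ {ε : ℕ → ZMod 2 | ∀ n ∈ F', ε n = v n} = μ C0 + μ C1 := by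
      rw [hsplit, measure_union hdisj hC1m]
    rw [ih, hm12] at hA
    show μ C0 = _
    rw [Finset.card_insert_of_notMem ha, pow_succ]
    refine (ENNReal.mul_right_inj (by norm_num : (2 : ℝ≥0∞) ≠ 0)
      (by norm_num : (2 : ℝ≥0∞) ≠ ⊤)).1 ?_
    have hrhs : (2 : ℝ≥0∞) * (2⁻¹ ^ F'.card * 2⁻¹) = 2⁻¹ ^ F'.card := by
      rw [mul_comm, mul_assoc, ENNReal.inv_mul_cancel (by norm_num) (by norm_num), mul_one]
    rw [hrhs, two_mul, ← hA]

lemma haar_compl_EVset (μ : Measure (ℕ → ZMod 2)) [μ.IsAddLeftInvariant]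
    [IsProbabilityMeasure μ] (v : ℕ → ZMod 2) : μ (EVset v)ᶜ = 0 := by
  set Bad : ℕ → Set (ℕ → ZMod 2) := fun k => {ε | ∀ n ∈ blk k, ε n = v n + 1} with hBad
  have hsub : (EVset v)ᶜ ⊆ ⋂ m, ⋃ j, Bad (m + j) := by
    intro ε hε
    rw [mem_compl_iff, EVset, mem_setOf_eq, eventually_atTop] at hε
    push_neg at hε
    refine mem_iInter.2 fun m => ?_
    obtain ⟨k, hk, hbad⟩ := hε m
    refine mem_iUnion.2 ⟨k - m, ?_⟩
    have hk' : m + (k - m) = k := by omega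
    rw [hBad]
    show ∀ n ∈ blk (m + (k - m)), ε n = v n + 1
    rw [hk']
    intro n hn
    rw [← zmod2_ne_iff]
    intro hcon
    exact (hbad n hn) hcon
  have hbm : ∀ k, μ (Bad k) = 2⁻¹ ^ (2 ^ k) := by
    intro k
    have := haar_cyl μ (blk k) (fun n => v n + 1)
    rw [card_blk] at this
    exact this
  have hbound : ∀ m, μ ((EVset v)ᶜ) ≤ 2⁻¹ ^ m * 2 := by
    intro m
    calc μ ((EVset v)ᶜ) ≤ μ (⋃ j, Bad (m + j)) :=
          measure_mono (subset_trans hsub (iInter_subset _ m))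
      _ ≤ ∑' j, μ (Bad (m + j)) := measure_iUnion_le _
      _ = ∑' j, (2⁻¹ : ℝ≥0∞) ^ (2 ^ (m + j)) := tsum_congr fun j => hbm _
      _ ≤ ∑' j, (2⁻¹ : ℝ≥0∞) ^ (m + j) :=
          ENNReal.tsum_le_tsum fun j => pow_le_pow_right_of_le_one'
            (ENNReal.inv_le_one.2 one_le_two) (le_of_lt Nat.lt_two_pow_self)
      _ = 2⁻¹ ^ m * ∑' j, (2⁻¹ : ℝ≥0∞) ^ j := by
          simp_rw [pow_add]; rw [ENNReal.tsum_mul_left]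
      _ = 2⁻¹ ^ m * 2 := by
          rw [ENNReal.tsum_geometric]
          congr 1
          have h12 : (1 : ℝ≥0∞) - 2⁻¹ = 2⁻¹ := by
            rw [← ENNReal.inv_two_add_inv_two, ENNReal.add_sub_cancel_right]
            exact ENNReal.inv_ne_top.2 (by norm_num)
          rw [h12, inv_inv]
  have htends : Tendsto (fun m : ℕ => (2⁻¹ : ℝ≥0∞) ^ m * 2) atTop (nhds 0) := by
    have h0 := ENNReal.tendsto_pow_atTop_nhds_zero_of_lt_one
      (by norm_num : (2⁻¹ : ℝ≥0∞) < 1)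
    have := ENNReal.Tendsto.mul_const (b := (2 : ℝ≥0∞)) h0
      (Or.inr (by norm_num : (2 : ℝ≥0∞) ≠ ⊤))
    simpa using this
  have hle : μ ((EVset v)ᶜ) ≤ 0 := ge_of_tendsto' htends hbound
  exact le_antisymm hle zero_le

end MeasureSide

/-! ### Separability of `c₀` -/

/-- rational finitely-supported approximations -/
def rapp (p : Σ N : ℕ, Fin N → ℚ) : C₀(ℕ, ℝ) :=
  ⟨⟨fun n => if h : n < p.1 then ((p.2 ⟨n, h⟩ : ℚ) : ℝ) else 0,
    continuous_of_discreteTopology⟩, by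
    rw [cocompact_eq_atTop (α := ℕ)]
    apply tendsto_const_nhds.congr'
    filter_upwards [eventually_ge_atTop p.1] with n hn
    rw [dif_neg (by omega)]⟩

@[simp] lemma rapp_apply (p : Σ N : ℕ, Fin N → ℚ) (n : ℕ) :
    rapp p n = if h : n < p.1 then ((p.2 ⟨n, h⟩ : ℚ) : ℝ) else 0 := rfl

lemma separable : TopologicalSpace.SeparableSpace C₀(ℕ, ℝ) := by
  have hdr : DenseRange rapp := by
    rw [Metric.denseRange_iff]
    intro h δ hδ
    have hz := zero_at_infty h
    rw [cocompact_eq_atTop (α := ℕ)] at hz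
    obtain ⟨N₀, hN₀⟩ := eventually_atTop.1 (Metric.tendsto_nhds.mp hz (δ / 2) (by positivity))
    have hq : ∀ n : ℕ, ∃ q : ℚ, |h n - q| < δ / 2 := fun n =>
      exists_rat_near (h n) (by positivity)
    choose q hqb using hq
    refine ⟨⟨N₀, fun i => q i⟩, ?_⟩
    rw [dist_eq_norm]
    have hb : ∀ n, |(h - rapp ⟨N₀, fun i => q i⟩) n| ≤ δ / 2 := by
      intro n
      have hco : (h - rapp ⟨N₀, fun i => q i⟩) n = h n - rapp ⟨N₀, fun i => q i⟩ n := by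
        simp [ZeroAtInftyContinuousMap.coe_sub]
      rw [hco]
      by_cases hn : n < N₀
      · rw [rapp_apply]
        simp only [dif_pos hn]
        exact le_of_lt (hqb n)
      · rw [rapp_apply]
        simp only [dif_neg hn]
        rw [sub_zero]
        have := hN₀ n (by omega)
        rw [Real.dist_eq, sub_zero] at this
        exact le_of_lt this
    have := norm_le_of_forall _ (by positivity) hb
    linarith
  exact ⟨⟨Set.range rapp, countable_range rapp, hdr⟩⟩

end HMAux

end

/-- In the Banach space `c₀ = C₀(ℕ, ℝ)` of real sequences converging to `0` with the
supremum norm, there exists a set which is Haar meager (hence meager) but not Haar null. -/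
theorem exists_haarMeager_not_haarNull_c0 :
    ∃ S : Set C₀(ℕ, ℝ), IsHaarMeager S ∧ IsMeagre S ∧ ¬ IsHaarNull S := by
  classical
  refine ⟨HMAux.SS, ?_, HMAux.isMeagre_SS, ?_⟩
  · -- Haar meager
    refine ⟨HMAux.SS, subset_rfl, HMAux.measurableSet_SS,
      (ℕ → ZMod 2), PiNat.metricSpace, inferInstance, inferInstance, HMAux.gmap,
      HMAux.continuous_gmap, ?_⟩
    intro x
    have hseteq : HMAux.gmap ⁻¹' ((fun b => b + x) '' HMAux.SS)
        = (fun ε => HMAux.gmap ε - x) ⁻¹' HMAux.SS := by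
      ext ε
      simp only [Set.mem_preimage, Set.mem_image]
      constructor
      · rintro ⟨b, hb, hbe⟩
        have : b = HMAux.gmap ε - x := by rw [← hbe]; abel
        rwa [this] at hb
      · intro hb
        exact ⟨HMAux.gmap ε - x, hb, by abel⟩
    rw [hseteq, HMAux.preimage_EVset]
    exact HMAux.isMeagre_EVset _
  · -- not Haar null
    rintro ⟨μ, hprob, B, hSB, hBm, hnull⟩
    haveI := hprob
    letI : MeasurableSpace C₀(ℕ, ℝ) := borel _
    haveI : BorelSpace C₀(ℕ, ℝ) := ⟨rfl⟩
    haveI : TopologicalSpace.SeparableSpace C₀(ℕ, ℝ) := HMAux.separable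
    haveI : SecondCountableTopology C₀(ℕ, ℝ) :=
      UniformSpace.secondCountable_of_separable _
    letI : MeasurableSpace (ℕ → ZMod 2) := borel _
    haveI : BorelSpace (ℕ → ZMod 2) := ⟨rfl⟩
    haveI hHp : IsProbabilityMeasure
        (Measure.addHaarMeasure (⊤ : TopologicalSpace.PositiveCompacts (ℕ → ZMod 2))) := by
      constructor
      have := Measure.addHaarMeasure_self
        (K₀ := (⊤ : TopologicalSpace.PositiveCompacts (ℕ → ZMod 2)))
      rwa [TopologicalSpace.PositiveCompacts.coe_top] at this
    have hgm : Measurable HMAux.gmap := HMAux.continuous_gmap.measurable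
    set ν : Measure C₀(ℕ, ℝ) :=
      (Measure.addHaarMeasure (⊤ : TopologicalSpace.PositiveCompacts (ℕ → ZMod 2))).map
        HMAux.gmap with hν
    haveI : IsProbabilityMeasure ν := Measure.isProbabilityMeasure_map hgm.aemeasurable
    have hν0 : ∀ a : C₀(ℕ, ℝ), ν ((fun b => a + b) '' Bᶜ) = 0 := by
      intro a
      have himg : (fun b => a + b) '' Bᶜ = (fun b => -a + b) ⁻¹' Bᶜ := by
        ext c
        simp only [Set.mem_image, Set.mem_preimage]
        constructor
        · rintro ⟨b, hb, rfl⟩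
          have : -a + (a + b) = b := by abel
          rwa [this]
        · intro hc
          exact ⟨-a + c, hc, by abel⟩
      have hmeas : MeasurableSet ((fun b => -a + b) ⁻¹' Bᶜ) :=
        (continuous_add_left (-a)).measurable hBm.compl
      rw [himg, hν, Measure.map_apply hgm hmeas]
      refine measure_mono_null ?_ (HMAux.haar_compl_EVset _ (HMAux.good a))
      intro ε hε
      rw [Set.mem_compl_iff]
      intro hEV
      rw [← HMAux.preimage_EVset a] at hEV
      have hmem : -a + HMAux.gmap ε ∈ HMAux.SS := by
        have hre : HMAux.gmap ε - a = -a + HMAux.gmap ε := by abel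
        rw [Set.mem_preimage] at hEV
        rwa [hre] at hEV
      exact (hε : -a + HMAux.gmap ε ∈ Bᶜ) (hSB hmem)
    -- Fubini argument
    have haddm : Measurable (fun p : C₀(ℕ, ℝ) × C₀(ℕ, ℝ) => p.1 + p.2) :=
      continuous_add.measurable
    set sadd : Set (C₀(ℕ, ℝ) × C₀(ℕ, ℝ)) := {p | p.1 + p.2 ∈ B} with hsadd
    have hsm : MeasurableSet sadd := haddm hBm
    have hI : (μ.prod ν) sadd = 0 := by
      rw [Measure.prod_apply_symm hsm]
      have hz : ∀ b, μ ((fun a => (a, b)) ⁻¹' sadd) = 0 := by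
        intro b
        have hslice : ((fun a => (a, b)) ⁻¹' sadd) = (fun c => -b + c) '' B := by
          ext c
          simp only [Set.mem_preimage, hsadd, Set.mem_setOf_eq, Set.mem_image]
          constructor
          · intro h
            exact ⟨c + b, h, by abel⟩
          · rintro ⟨d, hd, rfl⟩
            have : -b + d + b = d := by abel
            rw [this]
            exact hd
        rw [hslice]
        exact hnull (-b)
      rw [lintegral_congr hz, lintegral_zero]
    have hII : (μ.prod ν) saddᶜ = 0 := by
      rw [Measure.prod_apply hsm.compl]
      have hz : ∀ a, ν (Prod.mk a ⁻¹' saddᶜ) = 0 := by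
        intro a
        have hslice : Prod.mk a ⁻¹' saddᶜ = (fun b => -a + b) '' Bᶜ := by
          ext c
          simp only [Set.mem_preimage, Set.mem_compl_iff, hsadd, Set.mem_setOf_eq,
            Set.mem_image]
          constructor
          · intro h
            exact ⟨a + c, h, by abel⟩
          · rintro ⟨d, hd, rfl⟩
            have : a + (-a + d) = d := by abel
            rw [this]
            exact hd
        rw [hslice]
        exact hν0 (-a)
      rw [lintegral_congr hz, lintegral_zero]
    have hle := measure_union_le (μ := μ.prod ν) sadd saddᶜ
    rw [Set.union_compl_self, hI, hII, measure_univ] at hle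
    simp at hle
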